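/- The set of infinite binary sequences for which some forecasting system from a fixed countable family is high-low calibrated is a meagre subset of Cantor space, hence has empty interior and is not all of Cantor space. -/

import Mathlib

open Filter Topology

/-- The forecast probability on day `k` for data sequence `a`:
`F` applied to the first `k` bits of `a`. -/
noncomputable def fc (F : List Bool → ℝ) (a : ℕ → Bool) (k : ℕ) : ℝ :=
  F (List.ofFn (fun i : Fin k => a i))

/-- The discrepancy on day `k`: `a_k - π_k`. -/
noncomputable def disc (F : List Bool → ℝ) (a : ℕ → Bool) (k : ℕ) : ℝ :=
  (if a k then 1 else 0) - fc F a k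

open Classical in
/-- Mean discrepancy over the days `k < n` satisfying `P`. -/
noncomputable def avgDisc (F : List Bool → ℝ) (a : ℕ → Bool) (P : ℕ → Prop) (n : ℕ) : ℝ :=
  (∑ k ∈ (Finset.range n).filter P, disc F a k) /
    (((Finset.range n).filter P).card : ℝ)

/-- `F` is high-low calibrated for `a`: for each of the two groups of days
(forecast `≥ 1/2`, forecast `< 1/2`), either the group is finite or the mean
discrepancy over that group among the first `n` days tends to `0`. -/
def HighLowCalibrated (F : List Bool → ℝ) (a : ℕ → Bool) : Prop :=
  ({k | 1/2 ≤ fc F a k}.Finite ∨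
      Tendsto (avgDisc F a (fun k => 1/2 ≤ fc F a k)) atTop (𝓝 0)) ∧
  ({k | fc F a k < 1/2}.Finite ∨
      Tendsto (avgDisc F a (fun k => fc F a k < 1/2)) atTop (𝓝 0))

open Classical in
/-- The adversarial sequence against `F`: `a_k = 1` iff the forecast is `< 1/2`. -/
noncomputable def adv (F : List Bool → ℝ) : ℕ → Bool
  | k => if F (List.ofFn (fun i : Fin k => adv F i)) < 1/2 then true else false

/-! ### Auxiliary machinery -/


/-- Extension of the prefix of `a` of length `n` by the adversarial strategy. -/
noncomputable def extSeq (F : List Bool → ℝ) (a : ℕ → Bool) (n : ℕ) : ℕ → Bool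
  | k => if k < n then a k
    else if F (List.ofFn (fun i : Fin k => extSeq F a n i)) < 1/2 then true else false

lemma extSeq_lt (F : List Bool → ℝ) (a : ℕ → Bool) (n k : ℕ) (h : k < n) :
    extSeq F a n k = a k := by
  rw [extSeq]; simp [h]

lemma extSeq_ge (F : List Bool → ℝ) (a : ℕ → Bool) (n k : ℕ) (h : n ≤ k) :
    extSeq F a n k = if fc F (extSeq F a n) k < 1/2 then true else false := by
  rw [extSeq]; simp [Nat.not_lt.mpr h, fc]

lemma fc_congr (F : List Bool → ℝ) {a b : ℕ → Bool} {k : ℕ} (h : ∀ i < k, a i = b i) :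
    fc F a k = fc F b k := by
  unfold fc
  have : (fun i : Fin k => a i) = (fun i : Fin k => b i) := funext fun i => h i i.isLt
  rw [this]

lemma disc_congr (F : List Bool → ℝ) {a b : ℕ → Bool} {k : ℕ} (h : ∀ i ≤ k, a i = b i) :
    disc F a k = disc F b k := by
  unfold disc
  rw [fc_congr F (fun i hi => h i hi.le), h k le_rfl]

open Classical in
lemma avgDisc_congr (F : List Bool → ℝ) {a b : ℕ → Bool} {n : ℕ} {P Q : ℕ → Prop}
    (h : ∀ i < n, a i = b i) (hPQ : ∀ k < n, (P k ↔ Q k)) :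
    avgDisc F a P n = avgDisc F b Q n := by
  unfold avgDisc
  have hf : (Finset.range n).filter P = (Finset.range n).filter Q := by
    apply Finset.filter_congr
    intro x hx; exact hPQ x (Finset.mem_range.mp hx)
  rw [hf]
  congr 1
  apply Finset.sum_congr rfl
  intro k hk
  have hk' := Finset.mem_range.mp (Finset.mem_filter.mp hk).1
  exact disc_congr F fun i hi => h i (lt_of_le_of_lt hi hk')

lemma closed_of_determined {s : Set (ℕ → Bool)} (n : ℕ)
    (h : ∀ a b : ℕ → Bool, (∀ i < n, a i = b i) → (a ∈ s ↔ b ∈ s)) : IsClosed s := by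
  have hs : s = (fun a : ℕ → Bool => fun i : Fin n => a i) ⁻¹'
      ((fun a : ℕ → Bool => fun i : Fin n => a i) '' s) := by
    ext b
    constructor
    · exact fun hb => ⟨b, hb, rfl⟩
    · rintro ⟨a, ha, hab⟩
      exact (h a b (fun i hi => congrFun hab ⟨i, hi⟩)).mp ha
  rw [hs]
  exact (isClosed_discrete _).preimage (continuous_pi fun i => continuous_apply _)

open Classical in
/-- The "bad" closed set: beyond stage `N`, each group is either empty or has
small average discrepancy. -/
def badSet (F : List Bool → ℝ) (N : ℕ) : Set (ℕ → Bool) :=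
  {a | ((∀ k ≥ N, ¬ (1/2 ≤ fc F a k)) ∨
          ∀ m ≥ N, |avgDisc F a (fun k => 1/2 ≤ fc F a k) m| ≤ 1/8) ∧
       ((∀ k ≥ N, ¬ (fc F a k < 1/2)) ∨
          ∀ m ≥ N, |avgDisc F a (fun k => fc F a k < 1/2) m| ≤ 1/8)}

lemma badSet_closed (F : List Bool → ℝ) (N : ℕ) : IsClosed (badSet F N) := by
  have h1 : ∀ (c : ℝ), IsClosed {a : ℕ → Bool | ∀ k ≥ N, ¬ (c ≤ fc F a k)} := by
    intro c
    have : {a : ℕ → Bool | ∀ k ≥ N, ¬ (c ≤ fc F a k)} =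
        ⋂ k, {a : ℕ → Bool | N ≤ k → ¬ (c ≤ fc F a k)} := by
      ext a; simp [Set.mem_iInter]
    rw [this]
    refine isClosed_iInter fun k => closed_of_determined k ?_
    intro a b hab
    simp only [Set.mem_setOf_eq, fc_congr F hab]
  have h1' : ∀ (c : ℝ), IsClosed {a : ℕ → Bool | ∀ k ≥ N, ¬ (fc F a k < c)} := by
    intro c
    have : {a : ℕ → Bool | ∀ k ≥ N, ¬ (fc F a k < c)} =
        ⋂ k, {a : ℕ → Bool | N ≤ k → ¬ (fc F a k < c)} := by
      ext a; simp [Set.mem_iInter]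
    rw [this]
    refine isClosed_iInter fun k => closed_of_determined k ?_
    intro a b hab
    simp only [Set.mem_setOf_eq, fc_congr F hab]
  have h2 : IsClosed {a : ℕ → Bool |
      ∀ m ≥ N, |avgDisc F a (fun k => 1/2 ≤ fc F a k) m| ≤ 1/8} := by
    have : {a : ℕ → Bool | ∀ m ≥ N, |avgDisc F a (fun k => 1/2 ≤ fc F a k) m| ≤ 1/8} =
        ⋂ m, {a : ℕ → Bool | N ≤ m → |avgDisc F a (fun k => 1/2 ≤ fc F a k) m| ≤ 1/8} := by
      ext a; simp [Set.mem_iInter]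
    rw [this]
    refine isClosed_iInter fun m => closed_of_determined m ?_
    intro a b hab
    have he : avgDisc F a (fun k => 1/2 ≤ fc F a k) m =
        avgDisc F b (fun k => 1/2 ≤ fc F b k) m :=
      avgDisc_congr F hab (fun k hk => by
        rw [fc_congr F (fun i hi => hab i (hi.trans hk))])
    simp only [Set.mem_setOf_eq, he]
  have h3 : IsClosed {a : ℕ → Bool |
      ∀ m ≥ N, |avgDisc F a (fun k => fc F a k < 1/2) m| ≤ 1/8} := by
    have : {a : ℕ → Bool | ∀ m ≥ N, |avgDisc F a (fun k => fc F a k < 1/2) m| ≤ 1/8} =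
        ⋂ m, {a : ℕ → Bool | N ≤ m → |avgDisc F a (fun k => fc F a k < 1/2) m| ≤ 1/8} := by
      ext a; simp [Set.mem_iInter]
    rw [this]
    refine isClosed_iInter fun m => closed_of_determined m ?_
    intro a b hab
    have he : avgDisc F a (fun k => fc F a k < 1/2) m =
        avgDisc F b (fun k => fc F b k < 1/2) m :=
      avgDisc_congr F hab (fun k hk => by
        rw [fc_congr F (fun i hi => hab i (hi.trans hk))])
    simp only [Set.mem_setOf_eq, he]
  exact IsClosed.inter ((h1 (1/2)).union h2) ((h1' (1/2)).union h3)

lemma calibrated_mem_badSet {F : List Bool → ℝ} {a : ℕ → Bool}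
    (h : HighLowCalibrated F a) : ∃ N, a ∈ badSet F N := by
  obtain ⟨h1, h2⟩ := h
  have key : ∀ (P : ℕ → Prop), ({k | P k}.Finite ∨
      Tendsto (avgDisc F a P) atTop (𝓝 0)) →
      ∃ N, (∀ k ≥ N, ¬ P k) ∨ ∀ m ≥ N, |avgDisc F a P m| ≤ 1/8 := by
    intro P hP
    rcases hP with hfin | htend
    · rcases hfin.bddAbove with ⟨N, hN⟩
      exact ⟨N + 1, Or.inl fun k hk hPk =>
        absurd (hN hPk) (by omega)⟩
    · rcases Metric.tendsto_atTop.mp htend (1/8) (by norm_num) with ⟨N, hN⟩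
      refine ⟨N, Or.inr fun m hm => ?_⟩
      have := hN m hm
      rw [Real.dist_eq, sub_zero] at this
      exact this.le
  obtain ⟨N1, hN1⟩ := key _ h1
  obtain ⟨N2, hN2⟩ := key _ h2
  refine ⟨max N1 N2, ?_, ?_⟩
  · rcases hN1 with h | h
    · exact Or.inl fun k hk => h k (le_trans (le_max_left _ _) hk)
    · exact Or.inr fun m hm => h m (le_trans (le_max_left _ _) hm)
  · rcases hN2 with h | h
    · exact Or.inl fun k hk => h k (le_trans (le_max_right _ _) hk)
    · exact Or.inr fun m hm => h m (le_trans (le_max_right _ _) hm)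

lemma abs_disc_le (F : List Bool → ℝ) (hF : ∀ w, F w ∈ Set.Icc (0:ℝ) 1)
    (b : ℕ → Bool) (k : ℕ) : |disc F b k| ≤ 1 := by
  have h := hF (List.ofFn (fun i : Fin k => b i))
  unfold disc fc
  rcases h with ⟨h0, h1⟩
  cases b k <;> simp <;> rw [abs_le] <;> constructor <;> linarith

open Classical in
lemma avg_large (F : List Bool → ℝ) (hF : ∀ w, F w ∈ Set.Icc (0:ℝ) 1)
    (b : ℕ → Bool) (P : ℕ → Prop) (n : ℕ) (ε : ℝ) (hε : ε = 1 ∨ ε = -1)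
    (hdisc : ∀ k, n ≤ k → P k → 1/2 ≤ ε * disc F b k) (m : ℕ)
    (hcard : 4*n+1 ≤ ((Finset.range m).filter P).card) :
    1/8 < |avgDisc F b P m| := by
  set T := (Finset.range m).filter P with hT
  set c : ℕ := T.card with hc
  have hcpos : (0:ℝ) < c := by
    have : 0 < c := lt_of_lt_of_le (by omega) hcard
    exact_mod_cast this
  have habs : |ε| = 1 := by rcases hε with rfl | rfl <;> simp
  -- split T
  have hsplit : T = T.filter (fun k => k < n) ∪ T.filter (fun k => ¬ k < n) :=
    (Finset.filter_union_filter_not_eq _ T).symm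
  have hdisj : Disjoint (T.filter (fun k => k < n)) (T.filter (fun k => ¬ k < n)) :=
    Finset.disjoint_filter_filter_not T T _
  have hcard1 : (T.filter (fun k => k < n)).card ≤ n := by
    calc (T.filter (fun k => k < n)).card ≤ (Finset.range n).card := by
          apply Finset.card_le_card
          intro x hx
          rcases Finset.mem_filter.mp hx with ⟨_, h⟩
          exact Finset.mem_range.mpr h
      _ = n := Finset.card_range n
  have hcard2 : c = (T.filter (fun k => k < n)).card + (T.filter (fun k => ¬ k < n)).card := by
    rw [hc]
    conv_lhs => rw [hsplit]
    rw [Finset.card_union_of_disjoint hdisj]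
  have hsum1 : -(n:ℝ) ≤ ∑ k ∈ T.filter (fun k => k < n), ε * disc F b k := by
    calc -(n:ℝ) ≤ -((T.filter (fun k => k < n)).card : ℝ) := by
          simp only [neg_le_neg_iff]; exact_mod_cast hcard1
      _ = ∑ _k ∈ T.filter (fun k => k < n), (-1 : ℝ) := by
          rw [Finset.sum_const]; simp
      _ ≤ _ := by
          apply Finset.sum_le_sum
          intro k _
          have := abs_disc_le F hF b k
          have h2 : |ε * disc F b k| ≤ 1 := by
            rw [abs_mul, habs, one_mul]; exact this
          linarith [(abs_le.mp h2).1]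
  have hsum2 : ((T.filter (fun k => ¬ k < n)).card : ℝ) * (1/2) ≤
      ∑ k ∈ T.filter (fun k => ¬ k < n), ε * disc F b k := by
    calc ((T.filter (fun k => ¬ k < n)).card : ℝ) * (1/2)
        = ∑ _k ∈ T.filter (fun k => ¬ k < n), (1/2 : ℝ) := by
          rw [Finset.sum_const]; simp [mul_comm]
      _ ≤ _ := by
          apply Finset.sum_le_sum
          intro k hk
          rcases Finset.mem_filter.mp hk with ⟨hkT, hkn⟩
          rcases Finset.mem_filter.mp hkT with ⟨_, hPk⟩
          exact hdisc k (Nat.not_lt.mp hkn) hPk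
  have hsumtot : -(n:ℝ) + ((c:ℝ) - n) * (1/2) ≤ ∑ k ∈ T, ε * disc F b k := by
    rw [hsplit, Finset.sum_union hdisj]
    have hc2 : (c:ℝ) - n ≤ ((T.filter (fun k => ¬ k < n)).card : ℝ) := by
      have : ((T.filter (fun k => k < n)).card : ℝ) ≤ n := by exact_mod_cast hcard1
      have heq : (c:ℝ) = ((T.filter (fun k => k < n)).card : ℝ) +
          ((T.filter (fun k => ¬ k < n)).card : ℝ) := by exact_mod_cast hcard2
      linarith
    nlinarith [hsum1, hsum2]
  have hmul : ∑ k ∈ T, ε * disc F b k = ε * ∑ k ∈ T, disc F b k := by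
    rw [Finset.mul_sum]
  have havg : ε * avgDisc F b P m = (∑ k ∈ T, ε * disc F b k) / c := by
    unfold avgDisc
    rw [hmul, mul_div_assoc]
  have hlt : 1/8 < ε * avgDisc F b P m := by
    rw [havg, lt_div_iff₀ hcpos]
    have hcge : (4*n+1 : ℝ) ≤ (c:ℝ) := by exact_mod_cast hcard
    nlinarith [hsumtot]
  calc 1/8 < ε * avgDisc F b P m := hlt
    _ ≤ |ε * avgDisc F b P m| := le_abs_self _
    _ = |avgDisc F b P m| := by rw [abs_mul, habs, one_mul]

open Classical in
lemma badSet_contra (F : List Bool → ℝ) (hF : ∀ w, F w ∈ Set.Icc (0:ℝ) 1)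
    (b : ℕ → Bool) (P : ℕ → Prop) (n N : ℕ) (hNn : N ≤ n)
    (hinf : {k | n ≤ k ∧ P k}.Infinite)
    (ε : ℝ) (hε : ε = 1 ∨ ε = -1) (hdisc : ∀ k, n ≤ k → P k → 1/2 ≤ ε * disc F b k)
    (hS : (∀ k ≥ N, ¬ P k) ∨ ∀ m ≥ N, |avgDisc F b P m| ≤ 1/8) : False := by
  rcases hS with hS | hS
  · obtain ⟨k, hk⟩ := hinf.nonempty
    exact hS k (le_trans hNn hk.1) hk.2
  · obtain ⟨t, hts, htc⟩ := hinf.exists_subset_card_eq (4*n+1)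
    set m : ℕ := max N (t.sup id + 1) with hm
    have hcard : 4*n+1 ≤ ((Finset.range m).filter P).card := by
      rw [← htc]
      apply Finset.card_le_card
      intro k hk
      have hk' := hts hk
      refine Finset.mem_filter.mpr ⟨Finset.mem_range.mpr ?_, hk'.2⟩
      have : k ≤ t.sup id := Finset.le_sup (f := id) hk
      omega
    have := avg_large F hF b P n ε hε hdisc m hcard
    have h2 := hS m (le_max_left _ _)
    linarith

lemma badSet_interior_empty (F : List Bool → ℝ) (hF : ∀ w, F w ∈ Set.Icc (0:ℝ) 1)
    (N : ℕ) : interior (badSet F N) = ∅ := by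
  by_contra hne
  obtain ⟨a, ha⟩ := Set.nonempty_iff_ne_empty.mpr hne
  have hmem : badSet F N ∈ 𝓝 a := mem_interior_iff_mem_nhds.mp ha
  rw [nhds_pi] at hmem
  obtain ⟨I, hIfin, t, ht, hsub⟩ := Filter.mem_pi.mp hmem
  -- a bound for I
  obtain ⟨n₀, hn₀⟩ := hIfin.bddAbove
  set n : ℕ := max (n₀ + 1) N with hn
  have hNn : N ≤ n := le_max_right _ _
  set b : ℕ → Bool := extSeq F a n with hb
  have hbcyl : b ∈ badSet F N := by
    apply hsub
    intro i hi
    have hin : i < n := by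
      have := hn₀ hi
      omega
    have : b i = a i := extSeq_lt F a n i hin
    rw [this]
    have := ht i
    rw [nhds_discrete, Filter.mem_pure] at this
    exact this
  -- one of the two groups beyond n is infinite
  have hunion : {k | n ≤ k ∧ 1/2 ≤ fc F b k} ∪ {k | n ≤ k ∧ fc F b k < 1/2} = Set.Ici n := by
    ext k
    simp only [Set.mem_union, Set.mem_setOf_eq, Set.mem_Ici]
    constructor
    · rintro (h | h) <;> exact h.1
    · intro h
      rcases le_or_gt (1/2) (fc F b k) with h' | h'
      · exact Or.inl ⟨h, h'⟩
      · exact Or.inr ⟨h, h'⟩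
  have hinf : ({k | n ≤ k ∧ 1/2 ≤ fc F b k}).Infinite ∨
      ({k | n ≤ k ∧ fc F b k < 1/2}).Infinite := by
    rw [← Set.infinite_union, hunion]
    exact Set.Ici_infinite n
  rcases hinf with hinf | hinf
  · -- high group: b k = false, disc = -fc, take ε = -1
    refine badSet_contra F hF b _ n N hNn hinf (-1) (Or.inr rfl) ?_ hbcyl.1
    intro k hk hPk
    have hbk : b k = false := by
      rw [hb, extSeq_ge F a n k hk]
      exact if_neg (not_lt.mpr hPk)
    unfold disc
    rw [hbk]
    simp only [Bool.false_eq_true, if_false, zero_sub, neg_mul, one_mul, neg_neg]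
    exact hPk
  · -- low group: b k = true, disc = 1 - fc, take ε = 1
    refine badSet_contra F hF b _ n N hNn hinf 1 (Or.inl rfl) ?_ hbcyl.2
    intro k hk hPk
    have hbk : b k = true := by
      rw [hb, extSeq_ge F a n k hk]
      exact if_pos hPk
    unfold disc
    rw [hbk]
    simp only [if_true, one_mul]
    linarith

theorem countable_family_calibration_set_meagre
    (F : ℕ → List Bool → ℝ) (hF : ∀ i w, F i w ∈ Set.Icc (0 : ℝ) 1) :
    IsMeagre {a : ℕ → Bool | ∃ i, HighLowCalibrated (F i) a} ∧
    interior {a : ℕ → Bool | ∃ i, HighLowCalibrated (F i) a} = ∅ ∧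
    {a : ℕ → Bool | ∃ i, HighLowCalibrated (F i) a} ≠ Set.univ := by
  set C := {a : ℕ → Bool | ∃ i, HighLowCalibrated (F i) a} with hC
  have hmeagre_bad : ∀ i N, IsMeagre (badSet (F i) N) := by
    intro i N
    have hcl := badSet_closed (F i) N
    have hint := badSet_interior_empty (F i) (hF i) N
    have hdense : Dense (badSet (F i) N)ᶜ := interior_eq_empty_iff_dense_compl.mp hint
    exact residual_of_dense_open hcl.isOpen_compl hdense
  have hsub : C ⊆ ⋃ p : ℕ, badSet (F (Nat.unpair p).1) (Nat.unpair p).2 := by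
    intro a ha
    obtain ⟨i, hi⟩ := ha
    obtain ⟨N, hN⟩ := calibrated_mem_badSet hi
    apply Set.mem_iUnion.mpr
    refine ⟨Nat.pair i N, ?_⟩
    rw [Nat.unpair_pair]
    exact hN
  have hmeagre : IsMeagre C :=
    (isMeagre_iUnion fun p => hmeagre_bad _ _).mono hsub
  have hint : interior C = ∅ := by
    rw [interior_eq_empty_iff_dense_compl]
    exact dense_of_mem_residual hmeagre
  refine ⟨hmeagre, hint, ?_⟩
  intro huniv
  rw [huniv, interior_univ] at hint
  exact (Set.univ_nonempty (α := ℕ → Bool)).ne_empty hint
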